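/- arXiv:0806.3380 — 2 statements merged into one kernel-verified Lean document; each statement's English description precedes it below -/
import Mathlib

section
/- Let C be a tensor triangulated category with a weight structure w compatible with the tensor product (i.e., C_{w≤0} ⊗ C_{w≤0} ⊆ C_{w≤0} and C_{w≥0} ⊗ C_{w≥0} ⊆ C_{w≥0}), the tensor bifunctor being additive and triangulated (exact) in each variable. Fix morphisms u : M_- → M_+ and u' : M_-' → M_+' with M_-, M_-' ∈ C_{w≤0} and M_+, M_+' ∈ C_{w≥0}, distinguished triangles C₀ → M_- →u M_+ → C₀[1] and C₀' → M_-' →u' M_+' → C₀'[1], and a distinguished triangle D → M_- ⊗ M_-' →(u⊗u') M_+ ⊗ M_+' → D[1]. If C₀ and C₀' are both without weights -1 and 0, then D is without weights -1 and 0. -/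
open CategoryTheory CategoryTheory.Limits CategoryTheory.Pretriangulated

universe v u

/-- The shift `S[n]` of a class of objects `S`: the objects isomorphic to `A⟦n⟧`
for some `A ∈ S`. -/
def shiftedSet {C : Type u} [Category.{v} C] [HasShift C ℤ] (S : Set C) (n : ℤ) : Set C :=
  {X | ∃ A ∈ S, Nonempty (X ≅ A⟦n⟧)}

/-- A weight structure on a pretriangulated category `C`, following Bondarko. -/
structure WeightStructure (C : Type u) [Category.{v} C] [Preadditive C] [HasZeroObject C]
    [HasShift C ℤ] [∀ n : ℤ, (shiftFunctor C n).Additive] [Pretriangulated C] where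
  /-- the objects of weights `≤ 0` -/
  le : Set C
  /-- the objects of weights `≥ 0` -/
  ge : Set C
  /-- `C_{w ≤ 0}` is closed under retracts -/
  retract_le : ∀ (X M : C) (i : X ⟶ M) (r : M ⟶ X), i ≫ r = 𝟙 X → M ∈ le → X ∈ le
  /-- `C_{w ≥ 0}` is closed under retracts -/
  retract_ge : ∀ (X M : C) (i : X ⟶ M) (r : M ⟶ X), i ≫ r = 𝟙 X → M ∈ ge → X ∈ ge
  /-- `C_{w ≤ 0} ⊆ C_{w ≤ 1}` -/
  le_shift : le ⊆ shiftedSet le 1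
  /-- `C_{w ≥ 1} ⊆ C_{w ≥ 0}` -/
  ge_shift : shiftedSet ge 1 ⊆ ge
  /-- orthogonality -/
  orth : ∀ (M N : C), M ∈ le → N ∈ shiftedSet ge 1 → ∀ f : M ⟶ N, f = 0
  /-- existence of weight filtrations -/
  exists_wf : ∀ M : C, ∃ (A B : C) (a : A ⟶ M) (b : M ⟶ B) (δ : B ⟶ A⟦(1:ℤ)⟧),
    Triangle.mk a b δ ∈ (distTriang C) ∧ A ∈ le ∧ B ∈ shiftedSet ge 1

namespace WeightStructure

variable {C : Type u} [Category.{v} C] [Preadditive C] [HasZeroObject C]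
  [HasShift C ℤ] [∀ n : ℤ, (shiftFunctor C n).Additive] [Pretriangulated C]

/-- `C_{w ≤ n} := C_{w ≤ 0}[n]`. -/
def wLE (w : WeightStructure C) (n : ℤ) : Set C := shiftedSet w.le n

/-- `C_{w ≥ n} := C_{w ≥ 0}[n]`. -/
def wGE (w : WeightStructure C) (n : ℤ) : Set C := shiftedSet w.ge n

/-- The heart `C_{w = 0} := C_{w ≤ 0} ∩ C_{w ≥ 0}`. -/
def heart (w : WeightStructure C) : Set C := w.le ∩ w.ge

/-- An object `M` is without weights `m, …, n` if it admits a weight filtration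
avoiding these weights. -/
def WithoutWeights (w : WeightStructure C) (m n : ℤ) (M : C) : Prop :=
  ∃ (A B : C) (a : A ⟶ M) (b : M ⟶ B) (δ : B ⟶ A⟦(1:ℤ)⟧),
    Triangle.mk a b δ ∈ (distTriang C) ∧ A ∈ w.wLE (m - 1) ∧ B ∈ w.wGE (n + 1)

end WeightStructure

section Tensor

variable {C : Type u} [Category.{v} C] [Preadditive C] [HasZeroObject C]
  [HasShift C ℤ] [∀ n : ℤ, (shiftFunctor C n).Additive] [Pretriangulated C]

/-- A tensor structure on `C` compatible with the triangulation: a bifunctor which is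
additive and triangulated (commutes with the shift and preserves distinguished triangles)
in each variable. -/
structure TensorTriangulated (C : Type u) [Category.{v} C] [Preadditive C] [HasZeroObject C]
    [HasShift C ℤ] [∀ n : ℤ, (shiftFunctor C n).Additive] [Pretriangulated C] where
  /-- the tensor bifunctor -/
  T : C ⥤ C ⥤ C
  /-- additivity in the second variable -/
  addR : ∀ X : C, (T.obj X).Additive
  /-- additivity in the first variable -/
  addL : ∀ Y : C, (T.flip.obj Y).Additive
  /-- commutation with the shift in the second variable -/
  commR : ∀ X : C, (T.obj X).CommShift ℤ
  /-- commutation with the shift in the first variable -/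
  commL : ∀ Y : C, (T.flip.obj Y).CommShift ℤ
  /-- exactness in the second variable -/
  trR : ∀ (X A B Z : C) (f : A ⟶ B) (g : B ⟶ Z) (h : Z ⟶ A⟦(1:ℤ)⟧),
    Triangle.mk f g h ∈ (distTriang C) →
    Triangle.mk ((T.obj X).map f) ((T.obj X).map g)
      ((T.obj X).map h ≫ (Functor.CommShift.commShiftIso (self := commR X) (T.obj X) (1:ℤ)).hom.app A) ∈ (distTriang C)
  /-- exactness in the first variable -/
  trL : ∀ (Y A B Z : C) (f : A ⟶ B) (g : B ⟶ Z) (h : Z ⟶ A⟦(1:ℤ)⟧),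
    Triangle.mk f g h ∈ (distTriang C) →
    Triangle.mk ((T.flip.obj Y).map f) ((T.flip.obj Y).map g)
      ((T.flip.obj Y).map h ≫ (Functor.CommShift.commShiftIso (self := commL Y) (T.flip.obj Y) (1:ℤ)).hom.app A) ∈ (distTriang C)

/-- The tensor product of two morphisms. -/
def TensorTriangulated.tmul (𝒯 : TensorTriangulated C) {X X' Y Y' : C}
    (f : X ⟶ Y) (g : X' ⟶ Y') : (𝒯.T.obj X).obj X' ⟶ (𝒯.T.obj Y).obj Y' :=
  (𝒯.T.map f).app X' ≫ (𝒯.T.obj Y).map g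

/-- The weight structure `w` is compatible with the tensor structure `𝒯`. -/
def TensorTriangulated.Compatible (𝒯 : TensorTriangulated C) (w : WeightStructure C) : Prop :=
  (∀ X Y : C, X ∈ w.le → Y ∈ w.le → (𝒯.T.obj X).obj Y ∈ w.le) ∧
  (∀ X Y : C, X ∈ w.ge → Y ∈ w.ge → (𝒯.T.obj X).obj Y ∈ w.ge)

end Tensor

section AuxLemmas

variable {C : Type u} [Category.{v} C] [Preadditive C] [HasZeroObject C]
  [HasShift C ℤ] [∀ n : ℤ, (shiftFunctor C n).Additive] [Pretriangulated C]

lemma shiftedSet_iso {S : Set C} {n : ℤ} {X Y : C} (e : X ≅ Y) (h : Y ∈ shiftedSet S n) :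
    X ∈ shiftedSet S n := by
  obtain ⟨A, hA, ⟨e'⟩⟩ := h
  exact ⟨A, hA, ⟨e.trans e'⟩⟩

lemma shiftedSet_shift {S : Set C} {m : ℤ} {X : C} (h : X ∈ shiftedSet S m) (k r : ℤ)
    (hr : m + k = r) : X⟦k⟧ ∈ shiftedSet S r := by
  obtain ⟨A, hA, ⟨e⟩⟩ := h
  exact ⟨A, hA, ⟨((shiftFunctor C k).mapIso e).trans ((shiftFunctorAdd' C m k r hr).symm.app A)⟩⟩

namespace WeightStructure

variable (w : WeightStructure C)

lemma le_iso {X Y : C} (e : X ≅ Y) (h : Y ∈ w.le) : X ∈ w.le :=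
  w.retract_le X Y e.hom e.inv e.hom_inv_id h

lemma ge_iso {X Y : C} (e : X ≅ Y) (h : Y ∈ w.ge) : X ∈ w.ge :=
  w.retract_ge X Y e.hom e.inv e.hom_inv_id h

lemma le_of_wLE_zero {X : C} (h : X ∈ w.wLE 0) : X ∈ w.le := by
  obtain ⟨A, hA, ⟨e⟩⟩ := h
  exact w.le_iso (e.trans ((shiftFunctorZero C ℤ).app A)) hA

lemma ge_of_wGE_zero {X : C} (h : X ∈ w.wGE 0) : X ∈ w.ge := by
  obtain ⟨A, hA, ⟨e⟩⟩ := h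
  exact w.ge_iso (e.trans ((shiftFunctorZero C ℤ).app A)) hA

lemma wLE_of_le {X : C} (h : X ∈ w.le) : X ∈ w.wLE 0 :=
  ⟨X, h, ⟨((shiftFunctorZero C ℤ).app X).symm⟩⟩

lemma wGE_of_ge {X : C} (h : X ∈ w.ge) : X ∈ w.wGE 0 :=
  ⟨X, h, ⟨((shiftFunctorZero C ℤ).app X).symm⟩⟩

lemma shift_le {X : C} {n : ℤ} (h : X ∈ w.wLE n) (k : ℤ) (hk : n + k = 0) :
    X⟦k⟧ ∈ w.le :=
  w.le_of_wLE_zero (shiftedSet_shift h k 0 hk)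

lemma wLE_mono {X : C} {n m : ℤ} (h : X ∈ w.wLE n) (hm : n + 1 = m) : X ∈ w.wLE m := by
  obtain ⟨A, hA, ⟨e⟩⟩ := h
  obtain ⟨A₁, hA₁, ⟨e₁⟩⟩ := w.le_shift hA
  exact ⟨A₁, hA₁, ⟨e.trans (((shiftFunctor C n).mapIso e₁).trans
    ((shiftFunctorAdd' C 1 n m (by omega)).symm.app A₁))⟩⟩

lemma wGE_mono {X : C} {n m : ℤ} (h : X ∈ w.wGE n) (hm : m + 1 = n) : X ∈ w.wGE m := by
  obtain ⟨B, hB, ⟨e⟩⟩ := h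
  have hB1 : B⟦(1:ℤ)⟧ ∈ w.ge := w.ge_shift ⟨B, hB, ⟨Iso.refl _⟩⟩
  exact ⟨B⟦(1:ℤ)⟧, hB1, ⟨e.trans ((shiftFunctorAdd' C 1 m n (by omega)).app B)⟩⟩

/-- Extension-closedness of `C_{w ≤ n}`. -/
lemma wLE_ext (n : ℤ) (T : Triangle C) (hT : T ∈ distTriang C)
    (h₁ : T.obj₁ ∈ w.wLE n) (h₃ : T.obj₃ ∈ w.wLE n) : T.obj₂ ∈ w.wLE n := by
  have hT' : (Triangle.shiftFunctor C (-n)).obj T ∈ distTriang C :=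
    Triangle.shift_distinguished T hT (-n)
  set T' := (Triangle.shiftFunctor C (-n)).obj T with hT'def
  have h₁' : T'.obj₁ ∈ w.le := w.shift_le h₁ (-n) (by ring)
  have h₃' : T'.obj₃ ∈ w.le := w.shift_le h₃ (-n) (by ring)
  obtain ⟨A, B, a, b, δ, hDt, hA, hB⟩ := w.exists_wf T'.obj₂
  have hb0 : b = 0 := by
    have h1 : T'.mor₁ ≫ b = 0 := w.orth _ _ h₁' hB _
    obtain ⟨g, hg⟩ := Triangle.yoneda_exact₂ T' hT' b h1
    have hg0 : g = 0 := w.orth _ _ h₃' hB g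
    rw [hg, hg0, comp_zero]
  obtain ⟨r, hr⟩ := Triangle.coyoneda_exact₂ _ hDt (𝟙 T'.obj₂)
    (by change 𝟙 _ ≫ b = 0; rw [hb0, comp_zero])
  have h2 : T'.obj₂ ∈ w.le := w.retract_le _ A r a hr.symm hA
  exact ⟨T.obj₂⟦(-n:ℤ)⟧, h2, ⟨((shiftFunctorCompIsoId C (-n) n (by ring)).app T.obj₂).symm⟩⟩

/-- Extension-closedness of `C_{w ≥ n}`. -/
lemma wGE_ext (n : ℤ) (T : Triangle C) (hT : T ∈ distTriang C)
    (h₁ : T.obj₁ ∈ w.wGE n) (h₃ : T.obj₃ ∈ w.wGE n) : T.obj₂ ∈ w.wGE n := by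
  have hT' : (Triangle.shiftFunctor C (1 - n)).obj T ∈ distTriang C :=
    Triangle.shift_distinguished T hT (1 - n)
  set T' := (Triangle.shiftFunctor C (1 - n)).obj T with hT'def
  have h₁' : T'.obj₁ ∈ shiftedSet w.ge 1 := shiftedSet_shift h₁ (1 - n) 1 (by ring)
  have h₃' : T'.obj₃ ∈ shiftedSet w.ge 1 := shiftedSet_shift h₃ (1 - n) 1 (by ring)
  obtain ⟨A, B, a, b, δ, hDt, hA, hB⟩ := w.exists_wf T'.obj₂
  have ha0 : a = 0 := by
    have h1 : a ≫ T'.mor₂ = 0 := w.orth _ _ hA h₃' _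
    obtain ⟨g, hg⟩ := Triangle.coyoneda_exact₂ T' hT' a h1
    have hg0 : g = 0 := w.orth _ _ hA h₁' g
    rw [hg, hg0, zero_comp]
  obtain ⟨g, hg⟩ := Triangle.yoneda_exact₂ _ hDt (𝟙 T'.obj₂)
    (by change a ≫ 𝟙 _ = 0; rw [ha0, zero_comp])
  have hBm : B⟦(-1:ℤ)⟧ ∈ w.ge := w.ge_of_wGE_zero (shiftedSet_shift hB (-1) 0 (by ring))
  have hY : T'.obj₂⟦(-1:ℤ)⟧ ∈ w.ge := by
    refine w.retract_ge _ (B⟦(-1:ℤ)⟧) ((shiftFunctor C (-1)).map b)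
      ((shiftFunctor C (-1)).map g) ?_ hBm
    change _ = b ≫ g at hg
    refine ((shiftFunctor C (-1)).map_comp b g).symm.trans ((congrArg (shiftFunctor C (-1)).map hg.symm).trans ?_)
    exact (shiftFunctor C (-1)).map_id _
  refine ⟨T'.obj₂⟦(-1:ℤ)⟧, hY, ⟨?_⟩⟩
  exact ((shiftFunctorCompIsoId C (1 - n) (n - 1) (by ring)).app T.obj₂).symm ≪≫
    ((shiftFunctorAdd' C (-1) n (n - 1) (by ring)).app T'.obj₂)

end WeightStructure

namespace TensorTriangulated

variable (𝒯 : TensorTriangulated C) (w : WeightStructure C)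

lemma tensLE_r {X Y : C} {n : ℤ} (hcomp : 𝒯.Compatible w) (hX : X ∈ w.le) (hY : Y ∈ w.wLE n) :
    (𝒯.T.obj X).obj Y ∈ w.wLE n := by
  obtain ⟨Y₀, hY₀, ⟨e⟩⟩ := hY
  exact ⟨(𝒯.T.obj X).obj Y₀, hcomp.1 X Y₀ hX hY₀,
    ⟨((𝒯.T.obj X).mapIso e).trans ((Functor.CommShift.commShiftIso (self := 𝒯.commR X) (𝒯.T.obj X) n).app Y₀)⟩⟩

lemma tensLE_l {X Y : C} {n : ℤ} (hcomp : 𝒯.Compatible w) (hX : X ∈ w.wLE n) (hY : Y ∈ w.le) :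
    (𝒯.T.obj X).obj Y ∈ w.wLE n := by
  obtain ⟨X₀, hX₀, ⟨e⟩⟩ := hX
  exact ⟨(𝒯.T.obj X₀).obj Y, hcomp.1 X₀ Y hX₀ hY,
    ⟨((𝒯.T.flip.obj Y).mapIso e).trans ((Functor.CommShift.commShiftIso (self := 𝒯.commL Y) (𝒯.T.flip.obj Y) n).app X₀)⟩⟩

lemma tensGE_r {X Y : C} {n : ℤ} (hcomp : 𝒯.Compatible w) (hX : X ∈ w.ge) (hY : Y ∈ w.wGE n) :
    (𝒯.T.obj X).obj Y ∈ w.wGE n := by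
  obtain ⟨Y₀, hY₀, ⟨e⟩⟩ := hY
  exact ⟨(𝒯.T.obj X).obj Y₀, hcomp.2 X Y₀ hX hY₀,
    ⟨((𝒯.T.obj X).mapIso e).trans ((Functor.CommShift.commShiftIso (self := 𝒯.commR X) (𝒯.T.obj X) n).app Y₀)⟩⟩

lemma tensGE_l {X Y : C} {n : ℤ} (hcomp : 𝒯.Compatible w) (hX : X ∈ w.wGE n) (hY : Y ∈ w.ge) :
    (𝒯.T.obj X).obj Y ∈ w.wGE n := by
  obtain ⟨X₀, hX₀, ⟨e⟩⟩ := hX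
  exact ⟨(𝒯.T.obj X₀).obj Y, hcomp.2 X₀ Y hX₀ hY,
    ⟨((𝒯.T.flip.obj Y).mapIso e).trans ((Functor.CommShift.commShiftIso (self := 𝒯.commL Y) (𝒯.T.flip.obj Y) n).app X₀)⟩⟩

lemma tmul_comp {X Y Z X' Y' Z' : C} (f : X ⟶ Y) (g : Y ⟶ Z) (f' : X' ⟶ Y') (g' : Y' ⟶ Z') :
    𝒯.tmul (f ≫ g) (f' ≫ g') = 𝒯.tmul f f' ≫ 𝒯.tmul g g' := by
  simp only [TensorTriangulated.tmul, Functor.map_comp, NatTrans.comp_app, Category.assoc,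
    NatTrans.naturality_assoc]

end TensorTriangulated

end AuxLemmas

/-- If the cones (shifted by `[-1]`) `C₀` of `u` and `C₀'` of `u'` are both without
weights `-1` and `0`, then so is the corresponding object `D` for `u ⊗ u'`. -/
theorem withoutWeights_tensor
    {C : Type u} [Category.{v} C] [Preadditive C] [HasZeroObject C]
    [HasShift C ℤ] [∀ n : ℤ, (shiftFunctor C n).Additive] [Pretriangulated C]
    [IsTriangulated C]
    (𝒯 : TensorTriangulated C) (w : WeightStructure C) (hcomp : 𝒯.Compatible w)
    (Mm Mp Mm' Mp' C₀ C₀' D : C)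
    (u : Mm ⟶ Mp) (u' : Mm' ⟶ Mp')
    (hMm : Mm ∈ w.le) (hMp : Mp ∈ w.ge) (hMm' : Mm' ∈ w.le) (hMp' : Mp' ∈ w.ge)
    (vm : C₀ ⟶ Mm) (vp : Mp ⟶ C₀⟦(1:ℤ)⟧)
    (hu : Triangle.mk vm u vp ∈ distTriang C)
    (vm' : C₀' ⟶ Mm') (vp' : Mp' ⟶ C₀'⟦(1:ℤ)⟧)
    (hu' : Triangle.mk vm' u' vp' ∈ distTriang C)
    (hC₀ : w.WithoutWeights (-1) 0 C₀) (hC₀' : w.WithoutWeights (-1) 0 C₀')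
    (dm : D ⟶ (𝒯.T.obj Mm).obj Mm') (dp : (𝒯.T.obj Mp).obj Mp' ⟶ D⟦(1:ℤ)⟧)
    (hD : Triangle.mk dm (𝒯.tmul u u') dp ∈ distTriang C) :
    w.WithoutWeights (-1) 0 D := by
  obtain ⟨A, B, a, b, δ, hTC, hA, hB⟩ := hC₀
  obtain ⟨A', B', a', b', δ', hTC', hA', hB'⟩ := hC₀'
  -- hA : A ∈ w.wLE (-1 - 1), hB : B ∈ w.wGE (0 + 1)
  -- Octahedron (a): factor u = p ≫ q through E
  obtain ⟨E, p, wE, hE⟩ := distinguished_cocone_triangle (a ≫ vm)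
  have Ha := Triangulated.someOctahedron rfl hTC hu hE
  set q := Ha.m₃ with hqdef
  -- Octahedron (b): factor u' = p' ≫ q' through E'
  obtain ⟨E', p', wE', hE'⟩ := distinguished_cocone_triangle (a' ≫ vm')
  have Hb := Triangulated.someOctahedron rfl hTC' hu' hE'
  set q' := Hb.m₃ with hq'def
  -- basic weight memberships
  have hA1 : A⟦(1:ℤ)⟧ ∈ w.wLE (-1) := shiftedSet_shift hA 1 (-1) (by ring)
  have hA1' : A'⟦(1:ℤ)⟧ ∈ w.wLE (-1) := shiftedSet_shift hA' 1 (-1) (by ring)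
  have hB2 : B⟦(1:ℤ)⟧ ∈ w.wGE 2 := shiftedSet_shift hB 1 2 (by ring)
  have hB2' : B'⟦(1:ℤ)⟧ ∈ w.wGE 2 := shiftedSet_shift hB' 1 2 (by ring)
  have hE_le : E ∈ w.le := by
    refine w.le_of_wLE_zero (w.wLE_ext 0 _ (rot_of_distTriang _ hE) ?_ ?_)
    · exact w.wLE_of_le hMm
    · exact w.wLE_mono hA1 (by ring)
  have hE_ge : E ∈ w.ge := by
    refine w.ge_of_wGE_zero (w.wGE_ext 0 _ Ha.mem ?_ ?_)
    · exact w.wGE_mono hB (by ring)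
    · exact w.wGE_of_ge hMp
  have hE_le' : E' ∈ w.le := by
    refine w.le_of_wLE_zero (w.wLE_ext 0 _ (rot_of_distTriang _ hE') ?_ ?_)
    · exact w.wLE_of_le hMm'
    · exact w.wLE_mono hA1' (by ring)
  have hE_ge' : E' ∈ w.ge := by
    refine w.ge_of_wGE_zero (w.wGE_ext 0 _ Hb.mem ?_ ?_)
    · exact w.wGE_mono hB' (by ring)
    · exact w.wGE_of_ge hMp'
  -- Octahedron (c): the cocone K₁ of p ⊗ p'
  have ht12 := 𝒯.trR Mm _ _ _ _ _ _ (rot_of_distTriang _ hE')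
  have ht23 := 𝒯.trL E' _ _ _ _ _ _ (rot_of_distTriang _ hE)
  obtain ⟨K₁, k₂, k₃, hK⟩ := distinguished_cocone_triangle (𝒯.tmul p p')
  have Hc := Triangulated.someOctahedron ((𝒯.T.map p).naturality p') ht12 ht23 hK
  have hK1 : K₁ ∈ w.wLE (-1) := by
    refine w.wLE_ext (-1) _ Hc.mem ?_ ?_
    · exact 𝒯.tensLE_r w hcomp hMm hA1'
    · exact 𝒯.tensLE_l w hcomp hA1 hE_le'
  -- Octahedron (d): the cocone L₁ of q ⊗ q'
  have hs12 := 𝒯.trL E' _ _ _ _ _ _ (rot_of_distTriang _ Ha.mem)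
  have hs23 := 𝒯.trR Mp _ _ _ _ _ _ (rot_of_distTriang _ Hb.mem)
  obtain ⟨L₁, l₂, l₃, hL⟩ := distinguished_cocone_triangle (𝒯.tmul q q')
  have Hd := Triangulated.someOctahedron rfl hs12 hs23 hL
  have hL1 : L₁ ∈ w.wGE 2 := by
    refine w.wGE_ext 2 _ Hd.mem ?_ ?_
    · exact 𝒯.tensGE_l w hcomp hB2 hE_ge'
    · exact 𝒯.tensGE_r w hcomp hMp hB2'
  -- Octahedron (e): the triangle K₁ ⟶ D⟦1⟧ ⟶ L₁
  have hufact : p ≫ q = u := Ha.comm₃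
  have hufact' : p' ≫ q' = u' := Hb.comm₃
  have hcomm : 𝒯.tmul p p' ≫ 𝒯.tmul q q' = 𝒯.tmul u u' := by
    rw [← hufact, ← hufact', 𝒯.tmul_comp]
  have He := Triangulated.someOctahedron hcomm hK hL (rot_of_distTriang _ hD)
  -- shift the triangle by -1 and conclude
  set Tm : Triangle C := Triangle.mk He.m₁ He.m₃ (l₃ ≫ k₂⟦(1:ℤ)⟧') with hTmdef
  have hT5 : (Triangle.shiftFunctor C (-1)).obj Tm ∈ distTriang C :=
    Triangle.shift_distinguished Tm He.mem (-1)
  set T₅ := (Triangle.shiftFunctor C (-1)).obj Tm with hT5def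
  have e : (D⟦(1:ℤ)⟧)⟦(-1:ℤ)⟧ ≅ D := (shiftFunctorCompIsoId C (1:ℤ) (-1:ℤ) (by ring)).app D
  refine ⟨K₁⟦(-1:ℤ)⟧, L₁⟦(-1:ℤ)⟧, T₅.mor₁ ≫ e.hom, e.inv ≫ T₅.mor₂, T₅.mor₃, ?_, ?_, ?_⟩
  · refine isomorphic_distinguished _ hT5 _ ?_
    exact Triangle.isoMk _ _ (Iso.refl _) e.symm (Iso.refl _)
      (by exact (Category.assoc _ _ _).trans ((congrArg (T₅.mor₁ ≫ ·) e.hom_inv_id).trans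
        ((Category.comp_id _).trans (Category.id_comp _).symm)))
      (by exact Category.comp_id _)
      (by exact ((congrArg (T₅.mor₃ ≫ ·) ((shiftFunctor C (1:ℤ)).map_id _)).trans
        (Category.comp_id _)).trans (Category.id_comp _).symm)
  · exact shiftedSet_shift hK1 (-1) (-1 - 1) (by ring)
  · exact shiftedSet_shift hL1 (-1) (0 + 1) (by ring)
end

section
/- Let C be a triangulated category (satisfying the octahedron axiom) with a weight structure w. Fix a morphism u : M_- → M_+ with M_- ∈ C_{w≤0} and M_+ ∈ C_{w≥0}, and a distinguished triangle C₀ → M_- →u M_+ → C₀[1]. Suppose: (i) M_- admits a weight filtration A → M_- →π₀ G_- → A[1] avoiding weight -1 (A ∈ C_{w≤-2}, G_- ∈ C_{w=0}); (ii) M_+ admits a weight filtration G_+ →i₀ M_+ → B → G_+[1] avoiding weight 1 (G_+ ∈ C_{w=0}, B ∈ C_{w≥2}); (iii) there exists an isomorphism φ : G_- → G_+ with i₀ ∘ φ ∘ π₀ = u. Then C₀ is without weights -1 and 0, i.e., C₀ admits a weight filtration C_{≤-2} → C₀ → C_{≥1} → C_{≤-2}[1] with C_{≤-2} ∈ C_{w≤-2}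 and C_{≥1} ∈ C_{w≥1}. -/
open CategoryTheory CategoryTheory.Limits CategoryTheory.Pretriangulated

universe v u

/-- Converse to the main theorem: if `u : M₋ ⟶ M₊` admits a factorization `u = i₀ ∘ φ ∘ π₀`
with `φ` an isomorphism, where `π₀` is the quotient of a weight filtration of `M₋` avoiding
weight `-1` and `i₀` is the subobject of a weight filtration of `M₊` avoiding weight `1`,
then any cone-shift `C₀` of `u` is without weights `-1` and `0`. -/
theorem withoutWeights_of_factorization
    {C : Type u} [Category.{v} C] [Preadditive C] [HasZeroObject C]
    [HasShift C ℤ] [∀ n : ℤ, (shiftFunctor C n).Additive] [Pretriangulated C]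
    [IsTriangulated C]
    (w : WeightStructure C) (Mm Mp C₀ : C) (u : Mm ⟶ Mp)
    (hMm : Mm ∈ w.le) (hMp : Mp ∈ w.ge)
    (vm : C₀ ⟶ Mm) (vp : Mp ⟶ C₀⟦(1:ℤ)⟧)
    (hu : Triangle.mk vm u vp ∈ distTriang C)
    (A Gm : C) (a : A ⟶ Mm) (π₀ : Mm ⟶ Gm) (δm : Gm ⟶ A⟦(1:ℤ)⟧)
    (hTm : Triangle.mk a π₀ δm ∈ distTriang C)
    (hA : A ∈ w.wLE (-2)) (hGm : Gm ∈ w.heart)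
    (Gp B : C) (i₀ : Gp ⟶ Mp) (b : Mp ⟶ B) (δp : B ⟶ Gp⟦(1:ℤ)⟧)
    (hTp : Triangle.mk i₀ b δp ∈ distTriang C)
    (hGp : Gp ∈ w.heart) (hB : B ∈ w.wGE 2)
    (φ : Gm ⟶ Gp) (hφ : IsIso φ) (hfac : π₀ ≫ φ ≫ i₀ = u) :
    w.WithoutWeights (-1) 0 C₀ := by
  -- triangle for the composite `φ ≫ i₀`, obtained from `hTp` via the iso `φ`
  have h23 : Triangle.mk (φ ≫ i₀) b (δp ≫ (inv φ)⟦(1:ℤ)⟧') ∈ distTriang C := by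
    refine isomorphic_distinguished _ hTp _ ?_
    refine Triangle.isoMk _ _ (@asIso _ _ _ _ φ hφ) (Iso.refl _) (Iso.refl _) ?_ ?_ ?_
    · exact Category.comp_id _
    · exact (Category.comp_id _).trans (Category.id_comp _).symm
    · dsimp
      erw [Category.id_comp, Category.assoc, ← Functor.map_comp, IsIso.inv_hom_id,
        CategoryTheory.Functor.map_id, Category.comp_id]
      rfl
  -- rotated weight filtration of `Mm`
  have h12 : Triangle.mk π₀ δm (-a⟦(1:ℤ)⟧') ∈ distTriang C := rot_of_distTriang _ hTm
  -- rotated triangle of `u`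
  have h13 : Triangle.mk u vp (-vm⟦(1:ℤ)⟧') ∈ distTriang C := rot_of_distTriang _ hu
  obtain ⟨m₁, m₃, _, _, _, _, mem⟩ := Triangulated.someOctahedron hfac h12 h23 h13
  -- shift the octahedron triangle `A⟦1⟧ ⟶ C₀⟦1⟧ ⟶ B ⟶ A⟦1⟧⟦1⟧` by `-1`
  let T := (Triangle.shiftFunctor C (-1)).obj
    (Triangle.mk m₁ m₃ ((δp ≫ (inv φ)⟦(1:ℤ)⟧') ≫ δm⟦(1:ℤ)⟧'))
  let e := (shiftEquiv C (1:ℤ)).unitIso.symm.app C₀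
  have hT' : Triangle.mk (T.mor₁ ≫ e.hom) (e.inv ≫ T.mor₂) T.mor₃ ∈ distTriang C := by
    refine isomorphic_distinguished _ (Triangle.shift_distinguished _ mem (-1)) _ ?_
    refine Triangle.isoMk _ _ (Iso.refl _) e.symm (Iso.refl _) ?_ ?_ ?_
    · exact (Category.assoc _ _ _).trans ((congrArg _ e.hom_inv_id).trans ((Category.comp_id _).trans (Category.id_comp _).symm))
    · exact Category.comp_id _
    · exact (congrArg _ (CategoryTheory.Functor.map_id _ _)).trans ((Category.comp_id _).trans (Category.id_comp _).symm)
  obtain ⟨A₀, hA₀, ⟨eA⟩⟩ := hA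
  obtain ⟨B₀, hB₀, ⟨eB⟩⟩ := hB
  refine ⟨T.obj₁, T.obj₃, _, _, _, hT', ?_, ?_⟩
  · rw [show (-1:ℤ) - 1 = -2 by norm_num]
    exact ⟨A₀, hA₀, ⟨((shiftEquiv C (1:ℤ)).unitIso.symm.app A : T.obj₁ ≅ A) ≪≫ eA⟩⟩
  · rw [show (0:ℤ) + 1 = 1 by norm_num]
    exact ⟨B₀, hB₀, ⟨((shiftFunctor C (-1:ℤ)).mapIso eB : T.obj₃ ≅ B₀⟦(2:ℤ)⟧⟦(-1:ℤ)⟧) ≪≫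
      ((shiftFunctorAdd' C 2 (-1) 1 (by norm_num)).app B₀).symm⟩⟩
end
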